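/- If H is a free factor of a group G (i.e., G = H * H̃ for some subgroup H̃), then the subspace topology on H induced from the profinite topology on G equals the profinite topology on H. -/

import Mathlib

lemma induced_bot_of_injective {α β : Type*} {f : α → β} (hf : Function.Injective f) :
    TopologicalSpace.induced f ⊥ = ⊥ :=
  le_antisymm (fun s _ => ⟨f '' s, trivial, Set.preimage_image_eq s hf⟩) bot_le

lemma term_eq {G : Type} [Group G] (H K : Subgroup G) [K.Normal] :
    TopologicalSpace.induced (fun h : H => (QuotientGroup.mk (h : G) : G ⧸ K)) ⊥
      = TopologicalSpace.induced
          (fun h : H => (QuotientGroup.mk h : H ⧸ K.comap H.subtype)) ⊥ := by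
  haveI : (K.comap H.subtype).Normal := Subgroup.normal_comap _
  have hinj : Function.Injective
      (QuotientGroup.map (K.comap H.subtype) K H.subtype le_rfl) := by
    intro a b
    induction a using QuotientGroup.induction_on with | H a =>
    induction b using QuotientGroup.induction_on with | H b =>
    intro hab
    simp only [QuotientGroup.map_mk] at hab
    rw [QuotientGroup.eq] at hab ⊢
    exact hab
  have hcomp : (fun h : H => (QuotientGroup.mk (h : G) : G ⧸ K)) =
      (QuotientGroup.map (K.comap H.subtype) K H.subtype le_rfl) ∘
        (fun h : H => (QuotientGroup.mk h : H ⧸ K.comap H.subtype)) := by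
    funext h; rfl
  rw [hcomp, ← induced_compose, induced_bot_of_injective hinj]

/-- The profinite topology on a group `G`: the weakest topology making the projection
to every finite (discrete) quotient continuous; equivalently, generated by cosets of
finite-index subgroups. -/
def profiniteTopology (G : Type) [Group G] : TopologicalSpace G :=
  ⨅ (K : Subgroup G) (_ : K.Normal) (_ : K.FiniteIndex),
    TopologicalSpace.induced (fun g : G => (QuotientGroup.mk g : G ⧸ K)) ⊥

/-- `G` is the internal free product of its subgroups `H` and `C`: the canonical map
`H ∗ C → G` is an isomorphism. -/
def IsInternalFreeProduct {G : Type} [Group G] (H C : Subgroup G) : Prop :=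
  Function.Bijective (Monoid.Coprod.lift H.subtype C.subtype)

/-- If `H` is a free factor of `G`, then the subspace topology on `H` induced from
the profinite topology on `G` equals the profinite topology on `H`. -/
theorem freeFactor_induced_profiniteTopology (G : Type) [Group G] (H : Subgroup G)
    (hfactor : ∃ C : Subgroup G, IsInternalFreeProduct H C) :
    TopologicalSpace.induced (Subtype.val : H → G) (profiniteTopology G) =
      profiniteTopology H := by
  obtain ⟨C, hC⟩ := hfactor
  let e : Monoid.Coprod H C ≃* G := MulEquiv.ofBijective _ hC
  let r : G →* H := (Monoid.Coprod.lift (MonoidHom.id H) 1).comp e.symm.toMonoidHom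
  have hr : ∀ h : H, r (h : G) = h := by
    intro h
    have he : e (Monoid.Coprod.inl h) = (h : G) := by
      simp [e, MulEquiv.ofBijective]
      exact Monoid.Coprod.lift_apply_inl H.subtype C.subtype h
    have : e.symm.toMonoidHom (h : G) = Monoid.Coprod.inl h := by
      rw [← he]; exact e.symm_apply_apply _
    show (Monoid.Coprod.lift (MonoidHom.id H) 1) (e.symm.toMonoidHom (h : G)) = h
    rw [this]; simp
  have hstep : TopologicalSpace.induced (Subtype.val : H → G) (profiniteTopology G)
      = ⨅ (K : Subgroup G) (_ : K.Normal) (_ : K.FiniteIndex),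
          TopologicalSpace.induced (fun h : H => (QuotientGroup.mk (h : G) : G ⧸ K)) ⊥ := by
    simp only [profiniteTopology, induced_iInf, induced_compose]
    rfl
  rw [hstep, profiniteTopology]
  apply le_antisymm
  · refine le_iInf fun N => le_iInf fun hN => le_iInf fun hfi => ?_
    haveI := hN; haveI := hfi
    let φ : G →* H ⧸ N := (QuotientGroup.mk' N).comp r
    haveI : Finite ↥φ.range := Subtype.finite
    haveI hKn : φ.ker.Normal := inferInstance
    haveI hKf : φ.ker.FiniteIndex := Subgroup.finiteIndex_ker φ
    have hcomap : φ.ker.comap H.subtype = N := by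
      ext h
      simp only [Subgroup.mem_comap, MonoidHom.mem_ker, MonoidHom.comp_apply,
        QuotientGroup.mk'_apply, φ]
      rw [QuotientGroup.eq_one_iff]
      simp [hr h]
    refine iInf_le_of_le φ.ker (iInf_le_of_le hKn (iInf_le_of_le hKf ?_))
    rw [term_eq H φ.ker, hcomap]
  · refine le_iInf fun K => le_iInf fun hK => le_iInf fun hfi => ?_
    haveI := hK; haveI := hfi
    haveI : (K.comap H.subtype).Normal := Subgroup.normal_comap _
    haveI : (K.comap H.subtype).FiniteIndex := Subgroup.instFiniteIndex_subgroupOf K H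
    refine iInf_le_of_le (K.comap H.subtype)
      (iInf_le_of_le ‹_› (iInf_le_of_le ‹_› ?_))
    rw [term_eq H K]
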